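/- If G is a connected simple graph whose Sombor matrix has exactly k ≥ 2 distinct eigenvalues, then the diameter of G is at most k − 1. -/

import Mathlib

open scoped Classical

noncomputable def somborMatrix {V : Type*} [Fintype V] (G : SimpleGraph V) :
    Matrix V V ℝ := fun i j =>
  if G.Adj i j then Real.sqrt ((G.degree i : ℝ) ^ 2 + (G.degree j : ℝ) ^ 2) else 0

lemma somborMatrix_isHermitian {V : Type*} [Fintype V] (G : SimpleGraph V) :
    (somborMatrix G).IsHermitian := by
  apply Matrix.ext
  intro i j
  simp only [Matrix.conjTranspose_apply, star_trivial, somborMatrix]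
  rw [G.adj_comm, add_comm]

/-- The Sombor eigenvalues of `G`. -/
noncomputable def somborEigs {V : Type*} [Fintype V] (G : SimpleGraph V) : V → ℝ :=
  (somborMatrix_isHermitian G).eigenvalues

/-- The Sombor spectral radius (largest Sombor eigenvalue). -/
noncomputable def somborSpecRad {V : Type*} [Fintype V] (G : SimpleGraph V) : ℝ :=
  ⨆ i, somborEigs G i

/-- The Sombor energy. -/
noncomputable def somborEnergy {V : Type*} [Fintype V] (G : SimpleGraph V) : ℝ :=
  ∑ i, |somborEigs G i|

/-- The Sombor Estrada index. -/
noncomputable def somborEstrada {V : Type*} [Fintype V] (G : SimpleGraph V) : ℝ :=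
  ∑ i, Real.exp (somborEigs G i)

/-- The forgotten topological index `F = ∑ d_i ^ 3`. -/
noncomputable def forgottenIndex {V : Type*} [Fintype V] (G : SimpleGraph V) : ℝ :=
  ∑ i, (G.degree i : ℝ) ^ 3

section Aux

variable {V : Type*} [Fintype V] [DecidableEq V]

lemma somborMatrix_nonneg (G : SimpleGraph V) (i j : V) : 0 ≤ somborMatrix G i j := by
  unfold somborMatrix
  split
  · exact Real.sqrt_nonneg _
  · exact le_refl 0

lemma somborMatrix_pos (G : SimpleGraph V) {i j : V} (h : G.Adj i j) :
    0 < somborMatrix G i j := by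
  have hd : 0 < G.degree i := (SimpleGraph.degree_pos_iff_exists_adj G i).mpr ⟨j, h⟩
  unfold somborMatrix
  rw [if_pos h]
  apply Real.sqrt_pos.mpr
  have : (0 : ℝ) < (G.degree i : ℝ) ^ 2 := by positivity
  nlinarith [sq_nonneg ((G.degree j : ℝ))]

lemma somborMatrix_pow_nonneg (G : SimpleGraph V) (m : ℕ) (i j : V) :
    0 ≤ (somborMatrix G ^ m) i j := by
  induction m generalizing i j with
  | zero =>
    simp only [pow_zero, Matrix.one_apply]
    split <;> norm_num
  | succ m ih =>
    rw [pow_succ', Matrix.mul_apply]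
    exact Finset.sum_nonneg fun w _ => mul_nonneg (somborMatrix_nonneg G i w) (ih w j)

lemma somborMatrix_pow_eq_zero (G : SimpleGraph V) (hconn : G.Connected) (m : ℕ) :
    ∀ u v : V, m < G.dist u v → (somborMatrix G ^ m) u v = 0 := by
  induction m with
  | zero =>
    intro u v h
    have : u ≠ v := by
      rintro rfl
      simp [SimpleGraph.dist_self] at h
    simp [Matrix.one_apply_ne this]
  | succ m ih =>
    intro u v h
    rw [pow_succ', Matrix.mul_apply]
    apply Finset.sum_eq_zero
    intro w _
    by_cases hw : G.Adj u w
    · have h1 : G.dist u w ≤ 1 := by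
        simpa using G.dist_le hw.toWalk
      have htri : G.dist u v ≤ G.dist u w + G.dist w v := hconn.dist_triangle
      have : m < G.dist w v := by omega
      rw [ih w v this, mul_zero]
    · simp [somborMatrix, hw]

lemma somborMatrix_pow_dist_pos (G : SimpleGraph V) (hconn : G.Connected) (m : ℕ) :
    ∀ u v : V, G.dist u v = m → 0 < (somborMatrix G ^ m) u v := by
  induction m with
  | zero =>
    intro u v h
    have : u = v := (hconn.dist_eq_zero_iff).mp h
    subst this
    simp [Matrix.one_apply]
  | succ m ih =>
    intro u v h
    obtain ⟨p, hp⟩ := hconn.exists_walk_length_eq_dist u v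
    rw [h] at hp
    cases p with
    | nil => simp at hp
    | cons hadj q =>
      rename_i w
      have hq : q.length = m := by simpa using hp
      have hwv : G.dist w v = m := by
        have hle : G.dist w v ≤ m := hq ▸ G.dist_le q
        have h1 : G.dist u w ≤ 1 := by simpa using G.dist_le hadj.toWalk
        have htri : G.dist u v ≤ G.dist u w + G.dist w v := hconn.dist_triangle
        omega
      rw [pow_succ', Matrix.mul_apply]
      have hterm : 0 < somborMatrix G u w * (somborMatrix G ^ m) w v :=
        mul_pos (somborMatrix_pos G hadj) (ih w v hwv)
      apply Finset.sum_pos' (fun x _ => mul_nonneg (somborMatrix_nonneg G u x)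
        (somborMatrix_pow_nonneg G m x v))
      exact ⟨w, Finset.mem_univ w, hterm⟩

open Polynomial in
lemma aeval_diagonal_matrix (d : V → ℝ) (p : ℝ[X]) :
    aeval (Matrix.diagonal d) p = Matrix.diagonal (fun i => p.eval (d i)) := by
  induction p using Polynomial.induction_on with
  | C a =>
    simp [aeval_C, Matrix.algebraMap_eq_diagonal]
  | add p q hp hq =>
    simp [map_add, hp, hq, Matrix.diagonal_add]
  | monomial n a ih =>
    have : (C a) * X ^ (n + 1) = ((C a) * X ^ n) * X := by ring
    rw [this, map_mul, ih, aeval_X]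
    ext i j
    by_cases hij : i = j
    · subst hij; simp [Matrix.diagonal_mul_diagonal]; try ring
    · simp [Matrix.diagonal_mul_diagonal, Matrix.diagonal_apply_ne _ hij]

lemma unitary_conj_pow (u B : Matrix V V ℝ) (hu' : star u * u = 1) (hu : u * star u = 1)
    (m : ℕ) : (u * B * star u) ^ m = u * B ^ m * star u := by
  induction m with
  | zero => simp [hu]
  | succ m ih =>
    rw [pow_succ, ih, pow_succ]
    calc u * B ^ m * star u * (u * B * star u)
        = u * B ^ m * (star u * u) * B * star u := by simp only [Matrix.mul_assoc]
      _ = u * (B ^ m * B) * star u := by rw [hu']; simp only [Matrix.mul_one, Matrix.mul_assoc]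

open Polynomial in
lemma aeval_unitary_conj (u B : Matrix V V ℝ) (hu : u * star u = 1) (hu' : star u * u = 1)
    (p : ℝ[X]) :
    aeval (u * B * star u) p = u * (aeval B p) * star u := by
  rw [aeval_eq_sum_range (p := p) (u * B * star u), aeval_eq_sum_range (p := p) B,
    Matrix.mul_sum, Matrix.sum_mul]
  apply Finset.sum_congr rfl
  intro i _
  rw [unitary_conj_pow u B hu' hu, Matrix.mul_smul, Matrix.smul_mul]

end Aux

open Polynomial

theorem stmt8 {n : ℕ} (G : SimpleGraph (Fin n)) (hconn : G.Connected) (k : ℕ)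
    (hk : 2 ≤ k) (hdist : (Finset.univ.image (somborEigs G)).card = k) :
    G.diam ≤ k - 1 := by
  set A := somborMatrix G with hA
  set hAH := somborMatrix_isHermitian G
  -- the annihilating polynomial
  set s : Finset ℝ := Finset.univ.image (somborEigs G) with hs
  set q : ℝ[X] := ∏ μ ∈ s, (X - C μ) with hq
  have hq_monic : q.Monic := monic_prod_of_monic _ _ fun μ _ => monic_X_sub_C μ
  have hq_deg : q.natDegree = k := by
    rw [hq, natDegree_prod _ _ (fun μ _ => X_sub_C_ne_zero μ)]
    simp [hdist]
  -- aeval A q = 0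
  have hU := Matrix.mem_unitaryGroup_iff.mp (hAH.eigenvectorUnitary).2
  have hU' := Matrix.mem_unitaryGroup_iff'.mp (hAH.eigenvectorUnitary).2
  have hspec : A = (hAH.eigenvectorUnitary : Matrix (Fin n) (Fin n) ℝ) *
      Matrix.diagonal (somborEigs G) * star (hAH.eigenvectorUnitary : Matrix (Fin n) (Fin n) ℝ) := by
    have := hAH.spectral_theorem
    simp [Function.comp] at this
    exact this
  have hq0 : aeval A q = 0 := by
    rw [hspec, aeval_unitary_conj _ _ hU hU', aeval_diagonal_matrix]
    have : (fun i => q.eval (somborEigs G i)) = fun _ => (0 : ℝ) := by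
      funext i
      rw [hq, eval_prod]
      apply Finset.prod_eq_zero (Finset.mem_image_of_mem _ (Finset.mem_univ i))
      simp
    rw [this]
    simp
  -- A^k is a combination of lower powers
  have hAk : A ^ k = ∑ i ∈ Finset.range k, (-(q.coeff i)) • A ^ i := by
    have := aeval_eq_sum_range (p := q) A
    rw [hq0, hq_deg, Finset.sum_range_succ] at this
    have hck : q.coeff k = 1 := by
      have := hq_monic.leadingCoeff
      rwa [leadingCoeff, hq_deg] at this
    rw [hck, one_smul] at this
    have h2 : A ^ k = -∑ i ∈ Finset.range k, q.coeff i • A ^ i := by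
      linear_combination (norm := abel) -this
    rw [h2, ← Finset.sum_neg_distrib]
    congr 1
    funext i
    rw [neg_smul]
  -- all powers lie in the span of A^0, ..., A^(k-1)
  set S : Submodule ℝ (Matrix (Fin n) (Fin n) ℝ) :=
    Submodule.span ℝ (Set.range fun j : Fin k => A ^ (j : ℕ)) with hS
  have hpow : ∀ m : ℕ, A ^ m ∈ S := by
    intro m
    induction m using Nat.strong_induction_on with
    | _ m ih =>
      by_cases hm : m < k
      · exact Submodule.subset_span ⟨⟨m, hm⟩, rfl⟩
      · push_neg at hm
        have hsplit : A ^ m = A ^ (m - k) * A ^ k := by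
          rw [← pow_add]; congr 1; omega
        rw [hsplit, hAk, Finset.mul_sum]
        apply Submodule.sum_mem
        intro i hi
        rw [Finset.mem_range] at hi
        rw [mul_smul_comm, ← pow_add]
        exact Submodule.smul_mem _ _ (ih (m - k + i) (by omega))
  -- every distance is at most k - 1
  have hdle : ∀ u v : Fin n, G.dist u v ≤ k - 1 := by
    intro u v
    by_contra hcon
    push_neg at hcon
    have hdk : k ≤ G.dist u v := by omega
    set d := G.dist u v with hd
    have hzero : ∀ B ∈ S, B u v = (0 : ℝ) := by
      intro B hB
      induction hB using Submodule.span_induction with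
      | mem x hx =>
        obtain ⟨j, rfl⟩ := hx
        exact somborMatrix_pow_eq_zero G hconn (j : ℕ) u v (by have := j.2; omega)
      | zero => simp
      | add x y _ _ hx hy => simp [Matrix.add_apply, hx, hy]
      | smul c x _ hx => simp [Matrix.smul_apply, hx]
    have hpos : 0 < (A ^ d) u v := somborMatrix_pow_dist_pos G hconn d u v rfl
    have := hzero (A ^ d) (hpow d)
    linarith
  -- conclude for the diameter
  have : Nonempty (Fin n) := hconn.nonempty
  obtain ⟨u, v, huv⟩ := G.exists_dist_eq_diam
  rw [← huv]
  exact hdle u v
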